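/- Let λ : ℝ → ℝ_{>0} be differentiable with 0 ≤ λ'(x) ≤ 1 for all x, σ the logistic function, and c, d ∈ ℝ. Define the zero-inflated Poisson kernel q(0, θ) = (1 − σ(c+θ)) + σ(c+θ) e^{−λ(d+θ)} and q(y, θ) = σ(c+θ) e^{−λ(d+θ)} λ(d+θ)^y / y! for y ≥ 1. Then for each y ∈ ℤ≥0, θ ↦ q(y+1, θ)/q(y, θ) is nondecreasing. -/

import Mathlib

open Real

noncomputable def logistic (x : ℝ) : ℝ := (1 + Real.exp (-x))⁻¹

lemma logistic_pos (x : ℝ) : 0 < logistic x := by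
  unfold logistic
  positivity

lemma logistic_mono : Monotone logistic := by
  intro a b hab
  unfold logistic
  have h1 : (0:ℝ) < 1 + Real.exp (-b) := by positivity
  have h2 : Real.exp (-b) ≤ Real.exp (-a) := Real.exp_le_exp.mpr (by linarith)
  exact inv_anti₀ h1 (by linarith)

/-- For the zero-inflated Poisson kernel with `0 ≤ λ' ≤ 1`, the ratio
`θ ↦ q(y+1,θ)/q(y,θ)` is nondecreasing in `θ` for each `y ∈ ℤ≥0`. -/
theorem zip_kernel_ratio_monotone
    (c d : ℝ) (lam : ℝ → ℝ) (hpos : ∀ x, 0 < lam x)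
    (hdiff : Differentiable ℝ lam)
    (hd0 : ∀ x : ℝ, 0 ≤ deriv lam x) (hd1 : ∀ x : ℝ, deriv lam x ≤ 1)
    (q : ℕ → ℝ → ℝ)
    (hq0 : ∀ θ : ℝ, q 0 θ =
      (1 - logistic (c + θ)) + logistic (c + θ) * Real.exp (-(lam (d + θ))))
    (hq1 : ∀ (y : ℕ) (θ : ℝ), q (y + 1) θ =
      logistic (c + θ) * Real.exp (-(lam (d + θ))) *
        (lam (d + θ)) ^ (y + 1) / (Nat.factorial (y + 1))) :
    ∀ y : ℕ, Monotone (fun θ : ℝ => q (y + 1) θ / q y θ) := by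
  -- lam is monotone
  have hlam_mono : Monotone lam := by
    apply monotone_of_deriv_nonneg hdiff hd0
  -- x ↦ x - lam x is monotone
  have hg_mono : Monotone (fun x : ℝ => x - lam x) := by
    apply monotone_of_deriv_nonneg (differentiable_id.sub hdiff)
    intro x
    rw [deriv_sub differentiableAt_id (hdiff x)]
    simp only [deriv_id, deriv_id'', id_eq]
    have := hd1 x
    linarith
  have hlamc_mono : Monotone (fun θ : ℝ => lam (d + θ)) := by
    intro a b hab
    exact hlam_mono (by linarith)
  intro y
  cases y with
  | zero =>
    have key : (fun θ : ℝ => q 1 θ / q 0 θ)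
        = fun θ : ℝ => lam (d + θ) * logistic ((c + θ) - lam (d + θ)) := by
      funext θ
      have h1 := hq1 0 θ
      have h0 := hq0 θ
      set L := lam (d + θ) with hL
      set x := c + θ with hx
      have hLpos : 0 < L := hpos _
      have hspos : 0 < logistic x := logistic_pos x
      have hsdef : logistic x = (1 + Real.exp (-x))⁻¹ := rfl
      have hden : (0:ℝ) < 1 + Real.exp (-x) := by positivity
      have h1ms : 1 - logistic x = Real.exp (-x) * logistic x := by
        rw [hsdef]
        field_simp
        ring
      have hq0' : q 0 θ = logistic x * (Real.exp (-x) + Real.exp (-L)) := by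
        rw [h0, h1ms]; ring
      have hlog2 : logistic (x - L)
          = Real.exp (-L) / (Real.exp (-x) + Real.exp (-L)) := by
        unfold logistic
        rw [eq_div_iff (by positivity)]
        rw [inv_mul_eq_div, div_eq_iff (by positivity)]
        have : Real.exp (-(x - L)) * Real.exp (-L) = Real.exp (-x) := by
          rw [← Real.exp_add]; ring_nf
        ring_nf
        ring_nf at this
        nlinarith [this]
      rw [h1, hq0', hlog2]
      have hepos : (0:ℝ) < Real.exp (-x) + Real.exp (-L) := by positivity
      field_simp
      ring
    rw [key]
    have hu_mono : Monotone (fun θ : ℝ => (c + θ) - lam (d + θ)) := by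
      have : (fun θ : ℝ => (c + θ) - lam (d + θ))
          = fun θ : ℝ => (c - d) + ((d + θ) - lam (d + θ)) := by
        funext θ; ring
      rw [this]
      intro a b hab
      have h : (d + a) - lam (d + a) ≤ (d + b) - lam (d + b) :=
        hg_mono (show d + a ≤ d + b by linarith)
      simp only
      linarith
    exact Monotone.mul hlamc_mono (logistic_mono.comp hu_mono)
      (fun θ => (hpos _).le) (fun θ => (logistic_pos _).le)
  | succ y =>
    have key : (fun θ : ℝ => q (y + 1 + 1) θ / q (y + 1) θ)
        = fun θ : ℝ => lam (d + θ) / (y + 2) := by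
      funext θ
      have h2 := hq1 (y + 1) θ
      have h1 := hq1 y θ
      set L := lam (d + θ) with hL
      set x := c + θ with hx
      have hLpos : 0 < L := hpos _
      have hspos : 0 < logistic x := logistic_pos x
      have hepos : (0:ℝ) < Real.exp (-L) := Real.exp_pos _
      have hf1 : (0:ℝ) < (Nat.factorial (y + 1) : ℝ) := by
        exact_mod_cast Nat.factorial_pos _
      have hfs : (Nat.factorial (y + 1 + 1) : ℝ)
          = (y + 2) * (Nat.factorial (y + 1) : ℝ) := by
        rw [Nat.factorial_succ]
        push_cast
        ring
      rw [h2, h1, hfs, pow_succ]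
      have hy2 : (0:ℝ) < (y:ℝ) + 2 := by positivity
      field_simp
    rw [key]
    intro a b hab
    have h := hlamc_mono hab
    simp only at h ⊢
    gcongr
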